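/- Let Ω ⊆ ℍ be an axially symmetric open set and let f : Ω → ℍ be Fueter hyperholomorphic (Df = 0 on Ω) and of axial type. Then for every x ∈ Ω with im(x) ≠ 0, writing u = re(x), v = |im(x)| and I_x = im(x)/|im(x)|, and for every J ∈ 𝕊, the Representation Formula holds: f(u + I_x v) = (1/2)[f(u + Jv) + f(u − Jv)] + (I_x·J/2)[f(u − Jv) − f(u + Jv)]. -/

import Mathlib

open Quaternion

noncomputable section

/-- The quaternion unit `e₁`. -/
def e1 : ℍ[ℝ] := ⟨0, 1, 0, 0⟩

/-- The quaternion unit `e₂`. -/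
def e2 : ℍ[ℝ] := ⟨0, 0, 1, 0⟩

/-- The quaternion unit `e₃`. -/
def e3 : ℍ[ℝ] := ⟨0, 0, 0, 1⟩

/-- The Cauchy–Fueter operator `Df = ∂f/∂x₀ + e₁ ∂f/∂x₁ + e₂ ∂f/∂x₂ + e₃ ∂f/∂x₃`. -/
def fueterD (f : ℍ[ℝ] → ℍ[ℝ]) (x : ℍ[ℝ]) : ℍ[ℝ] :=
  fderiv ℝ f x 1 + e1 * fderiv ℝ f x e1 + e2 * fderiv ℝ f x e2 + e3 * fderiv ℝ f x e3

lemma unit_facts (J : ℍ[ℝ]) (hJ : J ^ 2 = -1) : J.re = 0 ∧ ‖J‖ = 1 := by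
  have hn : ‖J‖ = 1 := by
    have : ‖J‖ ^ 2 = 1 := by rw [← norm_pow, hJ]; simp
    nlinarith [norm_nonneg J]
  have hns : normSq J = 1 := by
    rw [Quaternion.normSq_eq_norm_mul_self, hn]; ring
  have h1 := congrArg QuaternionAlgebra.re hJ
  rw [sq] at h1
  simp [Quaternion.re_mul] at h1
  rw [Quaternion.normSq_def'] at hns
  have : J.re ^ 2 = 0 := by nlinarith
  exact ⟨pow_eq_zero_iff (by norm_num) |>.mp this, hn⟩

lemma key_alg (A B I Jq : ℍ[ℝ]) (h : Jq * Jq = -1) :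
    A + I * B =
      (1 / 2 : ℝ) • ((A + Jq * B) + (A - Jq * B))
        + (1 / 2 : ℝ) • (I * Jq * ((A - Jq * B) - (A + Jq * B))) := by
  have h1 : (A + Jq * B) + (A - Jq * B) = (2 : ℝ) • A := by module
  have h2 : (A - Jq * B) - (A + Jq * B) = (-2 : ℝ) • (Jq * B) := by module
  rw [h1, h2, mul_smul_comm, show I * Jq * (Jq * B) = I * (Jq * Jq) * B by noncomm_ring, h,
    smul_smul, smul_smul]
  norm_num

/-- Representation Formula for Fueter hyperholomorphic functions of axial type on an
axially symmetric open set: with `u = re x`, `v = |im x|`, `I_x = im x / |im x|`,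
and any imaginary unit `J`,
`f(u + I_x v) = (1/2)[f(u+Jv) + f(u-Jv)] + (I_x J/2)[f(u-Jv) - f(u+Jv)]`. -/
theorem representation_formula_axial
    (Ω : Set ℍ[ℝ]) (hΩ : IsOpen Ω)
    (hsym : ∀ (u v : ℝ) (I J : ℍ[ℝ]), I ^ 2 = -1 → J ^ 2 = -1 →
      ((u : ℍ[ℝ]) + v • I) ∈ Ω → ((u : ℍ[ℝ]) + v • J) ∈ Ω)
    (f : ℍ[ℝ] → ℍ[ℝ])
    (hdiff : ∀ x ∈ Ω, DifferentiableAt ℝ f x)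
    (hD : ∀ x ∈ Ω, fueterD f x = 0)
    (A B : ℝ → ℝ → ℍ[ℝ])
    (hax : ∀ x ∈ Ω, x.im ≠ 0 →
      f x = A x.re ‖x.im‖ + (‖x.im‖⁻¹ • x.im) * B x.re ‖x.im‖)
    (x : ℍ[ℝ]) (hx : x ∈ Ω) (hxim : x.im ≠ 0)
    (J : ℍ[ℝ]) (hJ : J ^ 2 = -1) :
    f x =
      (1 / 2 : ℝ) • (f ((x.re : ℍ[ℝ]) + ‖x.im‖ • J) + f ((x.re : ℍ[ℝ]) - ‖x.im‖ • J))
        + (1 / 2 : ℝ) • ((‖x.im‖⁻¹ • x.im) * J *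
            (f ((x.re : ℍ[ℝ]) - ‖x.im‖ • J) - f ((x.re : ℍ[ℝ]) + ‖x.im‖ • J))) := by
  obtain ⟨hJre, hJn⟩ := unit_facts J hJ
  set u := x.re with hu
  set v := ‖x.im‖ with hv
  have hv0 : v ≠ 0 := norm_ne_zero_iff.mpr hxim
  have hvpos : 0 < v := norm_pos_iff.mpr hxim
  set I : ℍ[ℝ] := v⁻¹ • x.im with hI
  -- I is an imaginary unit
  have hI2 : I ^ 2 = -1 := by
    rw [hI, smul_pow, Quaternion.im_sq,
      show normSq x.im = ‖x.im‖ * ‖x.im‖ from Quaternion.normSq_eq_norm_mul_self x.im,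
      ← hv, smul_neg, Quaternion.smul_coe]
    norm_num
    have hvq : ((v : ℍ[ℝ]) ^ 2)⁻¹ = ((v ^ 2 : ℝ)⁻¹ : ℍ[ℝ]) := by push_cast; ring
    rw [hvq, show ((v : ℍ[ℝ]) * v) = ((v * v : ℝ) : ℍ[ℝ]) by push_cast; ring,
      ← Quaternion.coe_inv, ← Quaternion.coe_mul,
      show (v ^ 2 : ℝ)⁻¹ * (v * v) = 1 by rw [pow_two]; field_simp]
    exact Quaternion.coe_one
  -- x decomposes axially
  have hxdec : x = (u : ℍ[ℝ]) + v • I := by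
    rw [hI, smul_inv_smul₀ hv0, hu, Quaternion.re_add_im]
  -- J.im = J
  have hJim : J.im = J := by ext <;> simp [hJre]
  -- the two reflected points
  have hmemp : ((u : ℍ[ℝ]) + v • J) ∈ Ω := hsym u v I J hI2 hJ (hxdec ▸ hx)
  have hnegJ : (-J) ^ 2 = -1 := by rw [neg_pow]; simp [hJ]
  have hmemm : ((u : ℍ[ℝ]) + v • (-J)) ∈ Ω := hsym u v I (-J) hI2 hnegJ (hxdec ▸ hx)
  -- data for u + v•J
  have hrep : (↑u + v • J : ℍ[ℝ]).re = u := by simp [hJre]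
  have himp : (↑u + v • J : ℍ[ℝ]).im = v • J := by
    rw [Quaternion.im_add, Quaternion.im_coe, Quaternion.im_smul, hJim, zero_add]
  have hnimp : ‖(↑u + v • J : ℍ[ℝ]).im‖ = v := by
    rw [himp, norm_smul, hJn, Real.norm_eq_abs, abs_of_pos hvpos, mul_one]
  have himp0 : (↑u + v • J : ℍ[ℝ]).im ≠ 0 := by
    rw [himp]
    simp only [smul_ne_zero_iff]
    refine ⟨hv0, ?_⟩
    intro h; rw [h] at hJ; simp at hJ
  have hfp : f (↑u + v • J) = A u v + J * B u v := by
    rw [hax _ hmemp himp0, hrep, hnimp, himp, smul_smul, inv_mul_cancel₀ hv0, one_smul]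
  -- data for u + v•(-J) = u - v•J
  have hreq : (↑u + v • (-J) : ℍ[ℝ]).re = u := by simp [hJre]
  have himq : (↑u + v • (-J) : ℍ[ℝ]).im = v • (-J) := by
    rw [Quaternion.im_add, Quaternion.im_coe, Quaternion.im_smul, zero_add]
    congr 1
    ext <;> simp [hJre]
  have hnimq : ‖(↑u + v • (-J) : ℍ[ℝ]).im‖ = v := by
    rw [himq, norm_smul, norm_neg, hJn, Real.norm_eq_abs, abs_of_pos hvpos, mul_one]
  have himq0 : (↑u + v • (-J) : ℍ[ℝ]).im ≠ 0 := by
    rw [himq]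
    simp only [smul_ne_zero_iff, neg_ne_zero]
    refine ⟨hv0, ?_⟩
    intro h; rw [h] at hJ; simp at hJ
  have hfm : f (↑u + v • (-J)) = A u v - J * B u v := by
    rw [hax _ hmemm himq0, hreq, hnimq, himq, smul_smul, inv_mul_cancel₀ hv0, one_smul, neg_mul, ← sub_eq_add_neg]
  have hsubeq : (↑u + v • (-J) : ℍ[ℝ]) = ↑u - v • J := by
    rw [smul_neg, ← sub_eq_add_neg]
  -- f x
  have hfx : f x = A u v + I * B u v := hax x hx hxim
  rw [← hsubeq, hfx, hfp, hfm]
  exact key_alg (A u v) (B u v) I J (by rw [← sq]; exact hJ)
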